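/- Every finite lattice with at most seven elements is dismantlable. -/

import Mathlib

/-- A finite lattice `L` with `n` elements is *dismantlable* if there is a chain
`L₁ ⊆ L₂ ⊆ ... ⊆ Lₙ = L` of sublattices of `L` with `|Lᵢ| = i` for `i = 1, ..., n`. -/
def Dismantlable (L : Type*) [Lattice L] [Finite L] : Prop :=
  ∃ c : ℕ → Set L,
    (∀ i, 1 ≤ i → i ≤ Nat.card L → IsSublattice (c i) ∧ Nat.card (c i) = i) ∧
    (∀ i, 1 ≤ i → i < Nat.card L → c i ⊆ c (i + 1)) ∧
    c (Nat.card L) = Set.univ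

/-- `x 0, y 0, x 1, y 1, ..., x (n-1), y (n-1)` form a *crown of order `2n`* (for `n ≥ 3`)
in a poset: the `2n` elements are pairwise distinct, and the only comparability relations
among them are `x i ≤ y i` and `x (i+1) ≤ y i` (indices mod `n`). -/
def IsCrown {P : Type*} [PartialOrder P] {n : ℕ} (x y : Fin n → P) : Prop :=
  3 ≤ n ∧ Function.Injective x ∧ Function.Injective y ∧
  (∀ i j, x i ≠ y j) ∧
  (∀ i j, x i ≤ x j → i = j) ∧
  (∀ i j, y i ≤ y j → i = j) ∧
  (∀ i j, ¬ y i ≤ x j) ∧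
  (∀ i j, x i ≤ y j ↔ (i = j ∨ (i : ℕ) = ((j : ℕ) + 1) % n))

/-- An element is *join-irreducible* (in the weak sense, allowing `⊥`) if it is not the
join of two strictly smaller elements. -/
def JoinIrr {L : Type*} [Lattice L] (z : L) : Prop := ∀ a b : L, a ⊔ b = z → a = z ∨ b = z

/-- An element is *meet-irreducible* (in the weak sense, allowing `⊤`) if it is not the
meet of two strictly larger elements. -/
def MeetIrr {L : Type*} [Lattice L] (z : L) : Prop := ∀ a b : L, a ⊓ b = z → a = z ∨ b = z

/-- In a finite lattice, every element is determined by the join-irreducibles below it. -/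
lemma le_of_joinIrr_le {L : Type*} [Lattice L] [Finite L] (x y : L)
    (h : ∀ j : L, JoinIrr j → j ≤ x → j ≤ y) : x ≤ y := by
  induction x using WellFoundedLT.induction with
  | _ x ih =>
    by_cases hx : JoinIrr x
    · exact h x hx le_rfl
    · unfold JoinIrr at hx
      push_neg at hx
      obtain ⟨a, b, hab, ha, hb⟩ := hx
      have hax : a < x := lt_of_le_of_ne (hab ▸ le_sup_left) ha
      have hbx : b < x := lt_of_le_of_ne (hab ▸ le_sup_right) hb
      have h1 : a ≤ y := ih a hax (fun j hj hja => h j hj (hja.trans hax.le))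
      have h2 : b ≤ y := ih b hbx (fun j hj hjb => h j hj (hjb.trans hbx.le))
      calc x = a ⊔ b := hab.symm
        _ ≤ y := sup_le h1 h2

/-- Counting bound: a finite nonempty lattice has at most `2 ^ (|J| - 1)` elements,
where `J` is the set of join-irreducible elements (which contains `⊥`). -/
lemma card_le_pow_joinIrr (L : Type*) [Lattice L] [Fintype L] [Nonempty L]
    (J : Finset L) (hJ : ∀ j, j ∈ J ↔ JoinIrr j) :
    Fintype.card L ≤ 2 ^ (J.card - 1) := by
  classical
  set b : L := Finset.univ.inf' Finset.univ_nonempty id with hbdef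
  have hble : ∀ x : L, b ≤ x := fun x => Finset.inf'_le id (Finset.mem_univ x)
  have hbJ : JoinIrr b := by
    intro p q hpq
    left
    exact le_antisymm (hpq ▸ le_sup_left) (hble p)
  have hbmem : b ∈ J := (hJ b).2 hbJ
  set g : L → Finset L := fun x => (J.erase b).filter (· ≤ x) with hgdef
  have hginj : Function.Injective g := by
    have key : ∀ x y : L, g x = g y → x ≤ y := by
      intro x y hxy
      apply le_of_joinIrr_le
      intro j hj hjx
      by_cases hjb : j = b
      · exact hjb ▸ hble y
      · have : j ∈ g x := by
          simp [hgdef, Finset.mem_filter, Finset.mem_erase, hjb, hjx, hJ j, hj]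
        rw [hxy] at this
        simp [hgdef, Finset.mem_filter] at this
        exact this.2
    exact fun x y hxy => le_antisymm (key x y hxy) (key y x hxy.symm)
  have hmaps : ∀ x : L, g x ∈ (J.erase b).powerset := by
    intro x
    simp [hgdef, Finset.mem_powerset, Finset.filter_subset]
  calc Fintype.card L = Finset.univ.card := rfl
    _ ≤ ((J.erase b).powerset).card :=
        Finset.card_le_card_of_injOn g (fun x _ => hmaps x) (Function.Injective.injOn hginj)
    _ = 2 ^ (J.erase b).card := Finset.card_powerset _
    _ = 2 ^ (J.card - 1) := by rw [Finset.card_erase_of_mem hbmem]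

lemma dismantle_arith (n j m : ℕ) (h7 : n ≤ 7) (hjm : j + m ≤ n) (hj : 1 ≤ j) (hm : 1 ≤ m)
    (hnj : n ≤ 2 ^ (j - 1)) (hnm : n ≤ 2 ^ (m - 1)) : False := by
  have hj7 : j ≤ 7 := by omega
  have hm7 : m ≤ 7 := by omega
  interval_cases j <;> interval_cases m <;> norm_num at hnj hnm <;> omega

/-- Every finite nonempty lattice with at most 7 elements has a doubly irreducible element. -/
lemma exists_doubly_irr (L : Type*) [Lattice L] [Finite L] [Nonempty L]
    (h7 : Nat.card L ≤ 7) : ∃ z : L, JoinIrr z ∧ MeetIrr z := by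
  classical
  have : Fintype L := Fintype.ofFinite L
  by_contra hcon
  push_neg at hcon
  set J : Finset L := Finset.univ.filter JoinIrr with hJdef
  set M : Finset L := Finset.univ.filter MeetIrr with hMdef
  have hJmem : ∀ j, j ∈ J ↔ JoinIrr j := by simp [hJdef]
  have hMmem : ∀ j, j ∈ M ↔ MeetIrr j := by simp [hMdef]
  have hdisj : Disjoint J M := by
    rw [Finset.disjoint_left]
    intro a haJ haM
    exact hcon a ((hJmem a).1 haJ) ((hMmem a).1 haM)
  have hsum : J.card + M.card ≤ Fintype.card L := by
    rw [← Finset.card_union_of_disjoint hdisj]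
    exact Finset.card_le_card (Finset.subset_univ _)
  have hnj : Fintype.card L ≤ 2 ^ (J.card - 1) := card_le_pow_joinIrr L J hJmem
  have hnm : Fintype.card L ≤ 2 ^ (M.card - 1) := by
    have := card_le_pow_joinIrr Lᵒᵈ (M.map OrderDual.toDual.toEmbedding) ?_
    · simpa using this
    · intro j
      simp only [Finset.mem_map]
      constructor
      · rintro ⟨a, ha, rfl⟩
        exact (hMmem a).1 ha
      · intro hj
        exact ⟨OrderDual.ofDual j, (hMmem _).2 hj, rfl⟩
  have hbJ : ∃ b : L, JoinIrr b := by
    refine ⟨Finset.univ.inf' Finset.univ_nonempty id, ?_⟩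
    intro p q hpq
    exact Or.inl (le_antisymm (hpq ▸ le_sup_left) (Finset.inf'_le id (Finset.mem_univ p)))
  have htM : ∃ t : L, MeetIrr t := by
    refine ⟨Finset.univ.sup' Finset.univ_nonempty id, ?_⟩
    intro p q hpq
    exact Or.inl (le_antisymm (Finset.le_sup' id (Finset.mem_univ p)) (hpq ▸ inf_le_left))
  obtain ⟨b, hb⟩ := hbJ
  obtain ⟨t, ht⟩ := htM
  have hJ1 : 1 ≤ J.card := Finset.card_pos.2 ⟨b, (hJmem b).2 hb⟩
  have hM1 : 1 ≤ M.card := Finset.card_pos.2 ⟨t, (hMmem t).2 ht⟩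
  rw [Nat.card_eq_fintype_card] at h7
  exact dismantle_arith (Fintype.card L) J.card M.card h7 hsum hJ1 hM1 hnj hnm

/-- A nonempty sublattice with at most 7 elements has a removable element. -/
lemma dismantle_removal {L : Type*} [Lattice L] [Finite L] (S : Set L) (hS : IsSublattice S)
    (h1 : S.Nonempty) (h7 : S.ncard ≤ 7) :
    ∃ z ∈ S, IsSublattice (S \ {z}) := by
  set SL : Sublattice L := ⟨S, hS.supClosed, hS.infClosed⟩ with hSL
  have : Nonempty SL := h1.to_subtype
  have hcard : Nat.card SL ≤ 7 := by
    have h : Nat.card ↥S ≤ 7 := by rw [Nat.card_coe_set_eq]; exact h7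
    exact h
  obtain ⟨z, hzJ, hzM⟩ := exists_doubly_irr SL hcard
  refine ⟨z.val, z.prop, ?_, ?_⟩
  · rintro a ⟨haS, haz⟩ b ⟨hbS, hbz⟩
    refine ⟨hS.supClosed haS hbS, ?_⟩
    intro hab
    simp only [Set.mem_singleton_iff] at hab
    have : (⟨a, haS⟩ : SL) ⊔ ⟨b, hbS⟩ = z := Subtype.ext hab
    rcases hzJ _ _ this with h | h
    · exact haz (by simpa using congrArg Subtype.val h)
    · exact hbz (by simpa using congrArg Subtype.val h)
  · rintro a ⟨haS, haz⟩ b ⟨hbS, hbz⟩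
    refine ⟨hS.infClosed haS hbS, ?_⟩
    intro hab
    simp only [Set.mem_singleton_iff] at hab
    have : (⟨a, haS⟩ : SL) ⊓ ⟨b, hbS⟩ = z := Subtype.ext hab
    rcases hzM _ _ this with h | h
    · exact haz (by simpa using congrArg Subtype.val h)
    · exact hbz (by simpa using congrArg Subtype.val h)

lemma dismantle_build {L : Type*} [Lattice L] [Finite L] :
    ∀ k, ∀ S : Set L, IsSublattice S → S.ncard = k → k ≤ 7 →
    ∃ c : ℕ → Set L,
      (∀ i, 1 ≤ i → i ≤ k → IsSublattice (c i) ∧ Nat.card (c i) = i) ∧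
      (∀ i, 1 ≤ i → i < k → c i ⊆ c (i + 1)) ∧ c k = S := by
  intro k
  induction k with
  | zero =>
    intro S hS hcard _
    exact ⟨fun _ => S, fun i h1 h0 => absurd (h1.trans h0) (by norm_num),
      fun i h1 h0 => absurd (h1.trans_lt h0) (by norm_num), rfl⟩
  | succ k ih =>
    intro S hS hcard h7
    rcases Nat.eq_zero_or_pos k with rfl | hk
    · refine ⟨fun _ => S, ?_, ?_, rfl⟩
      · intro i h1 h2
        have : i = 1 := le_antisymm h2 h1
        subst this
        exact ⟨hS, by rw [Nat.card_coe_set_eq, hcard]⟩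
      · intro i h1 h2; omega
    · have hne : S.Nonempty := by
        rw [← Set.ncard_pos (Set.toFinite S)] ; omega
      obtain ⟨z, hzS, hS'⟩ := dismantle_removal S hS hne (by omega)
      have hcard' : (S \ {z}).ncard = k := by
        rw [Set.ncard_diff_singleton_of_mem hzS, hcard]
        omega
      obtain ⟨c', hc1, hc2, hc3⟩ := ih (S \ {z}) hS' hcard' (by omega)
      refine ⟨fun i => if i = k + 1 then S else c' i, ?_, ?_, by simp⟩
      · intro i h1 h2
        show IsSublattice (if i = k + 1 then S else c' i) ∧
          Nat.card ↥(if i = k + 1 then S else c' i) = i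
        by_cases hi : i = k + 1
        · subst hi
          rw [if_pos rfl]
          exact ⟨hS, by rw [Nat.card_coe_set_eq, hcard]⟩
        · rw [if_neg hi]
          exact hc1 i h1 (by omega)
      · intro i h1 h2
        show (if i = k + 1 then S else c' i) ⊆ (if i + 1 = k + 1 then S else c' (i + 1))
        have hi : i ≠ k + 1 := by omega
        rw [if_neg hi]
        by_cases hi1 : i + 1 = k + 1
        · rw [if_pos hi1]
          have : i = k := by omega
          subst this
          rw [hc3]
          exact Set.diff_subset
        · rw [if_neg hi1]
          exact hc2 i h1 (by omega)

/-- Every finite lattice with at most seven elements is dismantlable. -/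
theorem stmt0 (L : Type*) [Lattice L] [Finite L] (h : Nat.card L ≤ 7) :
    Dismantlable L := by
  obtain ⟨c, h1, h2, h3⟩ := dismantle_build (Nat.card L) (Set.univ : Set L)
    ⟨supClosed_univ, infClosed_univ⟩ (Set.ncard_univ L) h
  exact ⟨c, h1, h2, h3⟩
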